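/- Let R be a ring and let M be a nonzero R-module equipped with two finite filtrations 0 = A₀ ⊆ A₁ ⊆ ... ⊆ A_r = M and 0 = B₀ ⊆ B₁ ⊆ ... ⊆ B_s = M (with A₁ ≠ 0 and B₁ ≠ 0). Then there exists a nonzero R-module τ and indices i, j such that τ embeds into A_{i+1}/A_i and τ embeds into B_{j+1}/B_j. -/

import Mathlib

/-- Given two finite filtrations of a nonzero module `M`, there is a nonzero module `τ`
embedding into a layer of each filtration. -/
theorem common_submodule_of_two_filtrations
    {R : Type} [Ring R] {M : Type} [AddCommGroup M] [Module R M]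
    (hM : Nontrivial M)
    (r s : ℕ) (A B : ℕ → Submodule R M)
    (hAmono : Monotone A) (hBmono : Monotone B)
    (hA0 : A 0 = ⊥) (hAr : A r = ⊤) (hA1 : A 1 ≠ ⊥)
    (hB0 : B 0 = ⊥) (hBs : B s = ⊤) (hB1 : B 1 ≠ ⊥) :
    ∃ (τ : Type) (_ : AddCommGroup τ) (_ : Module R τ), Nontrivial τ ∧
      ∃ i < r, ∃ j < s,
        (∃ f : τ →ₗ[R] (↥(A (i + 1)) ⧸ Submodule.comap (A (i + 1)).subtype (A i)),
            Function.Injective f) ∧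
        (∃ g : τ →ₗ[R] (↥(B (j + 1)) ⧸ Submodule.comap (B (j + 1)).subtype (B j)),
            Function.Injective g) := by
  have hbotne : (⊥ : Submodule R M) ≠ ⊤ := by
    obtain ⟨x, hx⟩ := exists_ne (0 : M)
    intro h
    exact hx ((Submodule.mem_bot R).mp (h.symm ▸ Submodule.mem_top))
  have hr : 1 ≤ r := by
    by_contra h
    push_neg at h
    interval_cases r
    exact hbotne (hA0 ▸ hAr)
  have hs : 1 ≤ s := by
    by_contra h
    push_neg at h
    interval_cases s
    exact hbotne (hB0 ▸ hBs)
  have hex : ∃ n, A (n + 1) ⊓ B 1 ≠ ⊥ := by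
    refine ⟨r - 1, ?_⟩
    rw [Nat.sub_add_cancel hr, hAr, top_inf_eq]
    exact hB1
  classical
  set i := Nat.find hex with hi
  have hiP : A (i + 1) ⊓ B 1 ≠ ⊥ := Nat.find_spec hex
  have hilt : i < r := by
    have : i ≤ r - 1 := Nat.find_le (by
      rw [Nat.sub_add_cancel hr, hAr, top_inf_eq]; exact hB1)
    omega
  have hker : A i ⊓ B 1 = ⊥ := by
    rcases Nat.eq_zero_or_eq_succ_pred i with h0 | h1
    · rw [h0, hA0, bot_inf_eq]
    · have := Nat.find_min hex (m := i - 1) (by omega)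
      simp only [not_not] at this
      rwa [h1, Nat.succ_eq_add_one]
  set P := A (i + 1) with hP
  set W : Submodule R P := Submodule.comap P.subtype (B 1) with hW
  have hWne : W ≠ ⊥ := by
    intro h
    apply hiP
    rw [← Submodule.map_comap_subtype P (B 1), ← hW, h, Submodule.map_bot]
  have : Nontrivial W := Submodule.nontrivial_iff_ne_bot.mpr hWne
  refine ⟨W, inferInstance, inferInstance, this, i, hilt, 0, hs, ?_, ?_⟩
  · -- embed into A(i+1)/A i
    refine ⟨(Submodule.mkQ _).comp W.subtype, ?_⟩
    rw [← LinearMap.ker_eq_bot, LinearMap.ker_comp, Submodule.ker_mkQ]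
    ext x
    simp only [Submodule.mem_comap, Submodule.mem_bot, Submodule.coe_subtype]
    constructor
    · intro hx
      have hx1 : (x : P) = 0 := by
        have hxB : ((x : P) : M) ∈ B 1 := x.2
        have : ((x : P) : M) ∈ A i ⊓ B 1 := ⟨hx, hxB⟩
        rw [hker, Submodule.mem_bot] at this
        exact Subtype.ext this
      exact Subtype.ext hx1
    · intro hx; rw [hx]; simp [hA0]
  · -- embed into B 1 / B 0
    have hcod : ∀ x : W, (P.subtype.comp W.subtype) x ∈ B 1 := fun x => x.2
    refine ⟨(Submodule.mkQ _).comp (LinearMap.codRestrict (B 1) (P.subtype.comp W.subtype) hcod), ?_⟩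
    rw [← LinearMap.ker_eq_bot, LinearMap.ker_comp, Submodule.ker_mkQ]
    ext x
    simp only [LinearMap.mem_ker, Submodule.mem_comap, Submodule.mem_bot,
      LinearMap.codRestrict_apply, LinearMap.coe_comp, Function.comp_apply,
      Submodule.coe_subtype, hB0]
    constructor
    · intro hx
      exact Subtype.ext (Subtype.ext hx)
    · intro hx; rw [hx]; simp
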